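/- Let a ∈ [0, ∞) and q ∈ [1, ∞) with a < q. Then there exists a ℂ-linear subspace F of the Banach space ℓ^q such that F is dense in ℓ^q and every nonzero element f of F fails to belong to ⋂_{p>a} ℓ^p; that is, for every nonzero f ∈ F there exists a real p with a < p < ∞ and ∑_{n} |f(n)|^p = ∞. -/

import Mathlib

set_option maxHeartbeats 1000000

open scoped ENNReal

noncomputable def badFun (r : ℝ) (i : ℕ) : ℕ → ℂ := fun N =>
  if (Nat.unpair N).1 = i then (((((Nat.unpair N).2 : ℝ) + 1) ^ (-(1/r)) : ℝ) : ℂ) else 0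

lemma badFun_pair (r : ℝ) (i k : ℕ) :
    badFun r i (Nat.pair i k) = ((((k : ℝ) + 1) ^ (-(1/r)) : ℝ) : ℂ) := by
  simp [badFun, Nat.unpair_pair]

lemma badFun_ne (r : ℝ) {i j : ℕ} (h : j ≠ i) (k : ℕ) : badFun r i (Nat.pair j k) = 0 := by
  simp [badFun, Nat.unpair_pair, h]

lemma norm_badFun_pair (r : ℝ) (i k : ℕ) :
    ‖badFun r i (Nat.pair i k)‖ = ((k : ℝ) + 1) ^ (-(1/r)) := by
  rw [badFun_pair, Complex.norm_real, Real.norm_eq_abs,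
    abs_of_nonneg (Real.rpow_nonneg (by positivity) _)]

lemma badFun_zero_off (r : ℝ) (i : ℕ) {N : ℕ} (h : N ∉ Set.range (Nat.pair i)) :
    badFun r i N = 0 := by
  rw [badFun, if_neg]
  intro hc
  exact h ⟨(Nat.unpair N).2, by rw [← hc]; exact Nat.pair_unpair N⟩

lemma pair_injective (i : ℕ) : Function.Injective (Nat.pair i) := by
  intro a b h
  exact (Nat.pair_eq_pair.mp h).2

lemma summable_shift_rpow (t : ℝ) :
    Summable (fun k : ℕ => ((k : ℝ) + 1) ^ t) ↔ t < -1 := by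
  rw [← Real.summable_nat_rpow (p := t),
    ← summable_nat_add_iff (f := fun n : ℕ => (n : ℝ) ^ t) 1]
  apply summable_congr
  intro k
  push_cast
  rfl

lemma summable_norm_badFun_iff (r s : ℝ) (hs : 0 < s) (i : ℕ) :
    Summable (fun N : ℕ => ‖badFun r i N‖ ^ s) ↔ s / r > 1 := by
  rw [← Function.Injective.summable_iff (pair_injective i)
      (fun N hN => by rw [badFun_zero_off r i hN, norm_zero, Real.zero_rpow hs.ne'])]
  have : ((fun N => ‖badFun r i N‖ ^ s) ∘ Nat.pair i) =
      fun k : ℕ => ((k : ℝ) + 1) ^ (-(s/r)) := by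
    funext k
    simp only [Function.comp_apply, norm_badFun_pair]
    rw [← Real.rpow_mul (by positivity : (0:ℝ) ≤ (k:ℝ)+1)]
    ring_nf
  rw [this, summable_shift_rpow]
  constructor <;> intro h <;> linarith

lemma memℓp_badFun {q r : ℝ} (hq : 0 < q) (hr : 0 < r) (hrq : r < q) (i : ℕ) :
    Memℓp (badFun r i) (ENNReal.ofReal q) := by
  apply memℓp_gen
  rw [ENNReal.toReal_ofReal hq.le]
  rw [summable_norm_badFun_iff r q hq i]
  exact (one_lt_div hr).mpr hrq

noncomputable def badLp (q r : ℝ) (hq : 0 < q) (hr : 0 < r) (hrq : r < q) (i : ℕ) :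
    lp (fun _ : ℕ => ℂ) (ENNReal.ofReal q) :=
  ⟨badFun r i, memℓp_badFun hq hr hrq i⟩

lemma coe_badLp (q r : ℝ) (hq : 0 < q) (hr : 0 < r) (hrq : r < q) (i : ℕ) :
    (badLp q r hq hr hrq i : ∀ _ : ℕ, ℂ) = badFun r i := rfl

lemma norm_badLp (q r : ℝ) [Fact (1 ≤ ENNReal.ofReal q)] (hq : 0 < q) (hr : 0 < r) (hrq : r < q) (i : ℕ) :
    ‖badLp q r hq hr hrq i‖ = (∑' k : ℕ, ((k : ℝ) + 1) ^ (-(q/r))) ^ q⁻¹ := by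
  have htr : (ENNReal.ofReal q).toReal = q := ENNReal.toReal_ofReal hq.le
  have h0 : 0 < (ENNReal.ofReal q).toReal := by rw [htr]; exact hq
  have h1 := lp.norm_rpow_eq_tsum h0 (badLp q r hq hr hrq i)
  rw [htr] at h1
  have h2 : ∑' N : ℕ, ‖(badLp q r hq hr hrq i : ∀ _ : ℕ, ℂ) N‖ ^ q
      = ∑' k : ℕ, ((k : ℝ) + 1) ^ (-(q/r)) := by
    show ∑' N : ℕ, ‖badFun r i N‖ ^ q = _
    rw [← Function.Injective.tsum_eq (pair_injective i) (f := fun N => ‖badFun r i N‖ ^ q)]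
    · apply tsum_congr
      intro k
      rw [norm_badFun_pair, ← Real.rpow_mul (by positivity : (0:ℝ) ≤ (k:ℝ)+1)]
      ring_nf
    · intro N hN
      by_contra hc
      exact Function.mem_support.mp hN
        (by rw [badFun_zero_off r i hc, norm_zero, Real.zero_rpow hq.ne'])
  rw [h2] at h1
  rw [← h1]
  exact (Real.rpow_rpow_inv (norm_nonneg _) hq.ne').symm

theorem algebraic_genericity_ellQ_interP (a q : ℝ) (ha : 0 ≤ a) (haq : a < q)
    (hq : 1 ≤ q) [Fact (1 ≤ ENNReal.ofReal q)] :
    ∃ F : Submodule ℂ (lp (fun _ : ℕ => ℂ) (ENNReal.ofReal q)),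
      Dense (F : Set (lp (fun _ : ℕ => ℂ) (ENNReal.ofReal q))) ∧
      ∀ f ∈ F, f ≠ 0 →
        ∃ p : ℝ, a < p ∧ ¬ Summable fun n : ℕ => ‖(f : ∀ _ : ℕ, ℂ) n‖ ^ p := by
  classical
  have hq0 : (0:ℝ) < q := lt_of_lt_of_le one_pos hq
  set p : ℝ := (a + q) / 2 with hp_def
  set r : ℝ := (p + q) / 2 with hr_def
  have hap : a < p := by rw [hp_def]; linarith
  have hpq : p < q := by rw [hp_def]; linarith
  have hp0 : 0 < p := lt_of_le_of_lt ha hap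
  have hpr : p < r := by rw [hr_def]; linarith
  have hrq : r < q := by rw [hr_def]; linarith
  have hr0 : 0 < r := lt_trans hp0 hpr
  set Q := ENNReal.ofReal q with hQ
  set V : ℕ → lp (fun _ : ℕ => ℂ) Q := fun i => badLp q r hq0 hr0 hrq i with hV
  set x : ℕ × ℕ → lp (fun _ : ℕ => ℂ) Q :=
    (fun nm => lp.single Q nm.1 1 + ((1/2 : ℂ) ^ nm.2) • V (Nat.pair nm.1 nm.2)) with hx
  set F : Submodule ℂ (lp (fun _ : ℕ => ℂ) Q) := Submodule.span ℂ (Set.range x) with hF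
  have hQtop : Q ≠ ⊤ := ENNReal.ofReal_ne_top
  set C : ℝ := (∑' k : ℕ, ((k : ℝ) + 1) ^ (-(q/r))) ^ q⁻¹ with hC
  have hVnorm : ∀ i, ‖V i‖ = C := fun i => norm_badLp q r hq0 hr0 hrq i
  -- singles are in the closure of F
  have hmemsingle : ∀ n : ℕ, lp.single Q n (1:ℂ) ∈ F.topologicalClosure := by
    intro n
    have h0 : Filter.Tendsto (fun m : ℕ => ((1/2 : ℂ) ^ m) • V (Nat.pair n m))
        Filter.atTop (nhds 0) := by
      apply squeeze_zero_norm (a := fun m => (1/2 : ℝ) ^ m * C)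
      · intro m
        rw [norm_smul, hVnorm, norm_pow]
        norm_num
      · simpa using
          (tendsto_pow_atTop_nhds_zero_of_lt_one (by norm_num : (0:ℝ) ≤ 1/2)
            (by norm_num : (1/2:ℝ) < 1)).mul_const C
    have htend : Filter.Tendsto (fun m : ℕ => x (n, m)) Filter.atTop
        (nhds (lp.single Q n 1)) := by
      have h1 := (tendsto_const_nhds (x := lp.single Q n (1:ℂ)) (f := Filter.atTop (α := ℕ))).add h0
      rw [add_zero] at h1
      simp only [hx]
      exact h1
    exact mem_closure_of_tendsto htend
      (Filter.Eventually.of_forall fun m => Submodule.subset_span ⟨(n, m), rfl⟩)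
  have hdense : Dense (F : Set (lp (fun _ : ℕ => ℂ) Q)) := by
    intro f
    have hsum := lp.hasSum_single hQtop f
    rw [← Submodule.topologicalClosure_coe]
    refine F.isClosed_topologicalClosure.mem_of_tendsto hsum
      (Filter.Eventually.of_forall fun s => ?_)
    refine Submodule.sum_mem _ fun i _ => ?_
    have h1 : lp.single (E := fun _ : ℕ => ℂ) Q i (((f : ∀ _ : ℕ, ℂ) i) • (1:ℂ))
        = ((f : ∀ _ : ℕ, ℂ) i) • lp.single (E := fun _ : ℕ => ℂ) Q i (1:ℂ) :=
      by exact lp.single_smul Q i ((f : ∀ _ : ℕ, ℂ) i) 1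
    rw [smul_eq_mul, mul_one] at h1
    rw [h1]
    exact Submodule.smul_mem _ _ (hmemsingle i)
  refine ⟨F, hdense, ?_⟩
  intro f hf hf0
  refine ⟨p, hap, ?_⟩
  rw [hF, Finsupp.mem_span_range_iff_exists_finsupp] at hf
  obtain ⟨c, hc⟩ := hf
  have hcne : c ≠ 0 := by
    rintro rfl
    rw [Finsupp.sum_zero_index] at hc
    exact hf0 hc.symm
  obtain ⟨⟨n0, m0⟩, hj0⟩ := Finsupp.support_nonempty_iff.mpr hcne
  have hc0ne : c (n0, m0) ≠ 0 := Finsupp.mem_support_iff.mp hj0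
  set i0 : ℕ := Nat.pair n0 m0 with hi0
  set c0 : ℂ := c (n0, m0) * (1/2 : ℂ) ^ m0 with hc0
  have hc0' : c0 ≠ 0 := mul_ne_zero hc0ne (pow_ne_zero _ (by norm_num))
  set B : ℕ := (c.support.sup fun j => j.1) + 1 with hB
  have hcoord : ∀ k : ℕ, B ≤ k →
      (f : ∀ _ : ℕ, ℂ) (Nat.pair i0 k) = c0 * ((((k:ℝ)+1) ^ (-(1/r)) : ℝ) : ℂ) := by
    intro k hk
    have hNe : ∀ j ∈ c.support, j.1 ≠ Nat.pair i0 k := by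
      intro j hj
      have h1 : j.1 ≤ c.support.sup (fun j => j.1) := Finset.le_sup hj
      have h2 : k ≤ Nat.pair i0 k := Nat.right_le_pair _ _
      omega
    have e1 : (f : ∀ _ : ℕ, ℂ) (Nat.pair i0 k)
        = ∑ j ∈ c.support, c j * ((x j : ∀ _ : ℕ, ℂ) (Nat.pair i0 k)) := by
      rw [← hc, Finsupp.sum]
      simp only [lp.coeFn_sum, Finset.sum_apply, lp.coeFn_smul, Pi.smul_apply, smul_eq_mul]
    rw [e1]
    have e2 : ∀ j ∈ c.support, c j * ((x j : ∀ _ : ℕ, ℂ) (Nat.pair i0 k))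
        = if j = (n0, m0) then c0 * ((((k:ℝ)+1) ^ (-(1/r)) : ℝ) : ℂ) else 0 := by
      intro j hj
      have hxj : (x j : ∀ _ : ℕ, ℂ) (Nat.pair i0 k)
          = (1/2:ℂ)^j.2 * badFun r (Nat.pair j.1 j.2) (Nat.pair i0 k) := by
        rw [hx]
        simp only [lp.coeFn_add, Pi.add_apply, lp.coeFn_smul, Pi.smul_apply, smul_eq_mul]
        rw [lp.single_apply_ne Q j.1 1 (hNe j hj).symm, zero_add]
        rfl
      rw [hxj]
      by_cases hcase : j = (n0, m0)
      · subst hcase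
        rw [if_pos rfl, ← hi0, badFun_pair, hc0]
        ring
      · rw [if_neg hcase]
        have hne : i0 ≠ Nat.pair j.1 j.2 := by
          rw [hi0]
          intro hcontra
          apply hcase
          obtain ⟨h1, h2⟩ := Nat.pair_eq_pair.mp hcontra.symm
          exact Prod.ext h1 h2
        rw [badFun_ne r hne k]
        ring
    rw [Finset.sum_congr rfl e2, Finset.sum_ite_eq' c.support (n0, m0)
      (fun _ => c0 * ((((k:ℝ)+1) ^ (-(1/r)) : ℝ) : ℂ)), if_pos hj0]
  intro hS
  have h1 : Summable (fun k : ℕ => ‖(f : ∀ _ : ℕ, ℂ) (Nat.pair i0 k)‖ ^ p) :=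
    hS.comp_injective (pair_injective i0)
  have h2 : Summable (fun k : ℕ => ‖(f : ∀ _ : ℕ, ℂ) (Nat.pair i0 (k + B))‖ ^ p) :=
    (summable_nat_add_iff B).mpr h1
  have h3 : Summable (fun k : ℕ => ‖c0‖ ^ p * (((k:ℝ) + (B:ℝ) + 1) ^ (-(p/r)))) := by
    refine h2.congr fun k => ?_
    rw [hcoord (k + B) (Nat.le_add_left B k), norm_mul, Complex.norm_real, Real.norm_eq_abs,
      abs_of_nonneg (Real.rpow_nonneg (by positivity) _),
      Real.mul_rpow (norm_nonneg _) (Real.rpow_nonneg (by positivity) _),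
      ← Real.rpow_mul (by positivity)]
    push_cast
    ring_nf
  have h4 : Summable (fun k : ℕ => ((k:ℝ) + (B:ℝ) + 1) ^ (-(p/r))) :=
    (summable_mul_left_iff
      (ne_of_gt (Real.rpow_pos_of_pos (norm_pos_iff.mpr hc0') p))).mp h3
  have h5 : Summable (fun k : ℕ => ((k:ℝ) + 1) ^ (-(p/r))) := by
    refine (summable_nat_add_iff B).mp (h4.congr fun k => ?_)
    push_cast
    ring_nf
  rw [summable_shift_rpow] at h5
  have : p / r < 1 := (div_lt_one hr0).mpr hpr
  linarith
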